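/- Let G be a finite abstract simplicial complex with connection matrix L, regarded as a real symmetric matrix. Then the number of positive eigenvalues of L (counted with multiplicity) equals the number b of simplices of G of odd cardinality (even dimension), and the number of negative eigenvalues of L equals the number f of simplices of even cardinality (odd dimension); in particular, no eigenvalue is zero and p(G) - n(G) = b - f = χ(G). -/

import Mathlib

open Finset BigOperators

variable {α : Type*} [DecidableEq α]

/-- A finite abstract simplicial complex: a finite collection of nonempty finite
sets closed under taking nonempty subsets. -/
def IsComplex (G : Finset (Finset α)) : Prop :=
  (∀ x ∈ G, x.Nonempty) ∧ ∀ x ∈ G, ∀ y : Finset α, y.Nonempty → y ⊆ x → y ∈ G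

/-- ω(x) = (-1)^(|x|-1). -/
def omegaS (x : Finset α) : ℤ := (-1) ^ (x.card - 1)

/-- Euler characteristic χ(G) = ∑_{x∈G} ω(x). -/
def chi (G : Finset (Finset α)) : ℤ := ∑ x ∈ G, omegaS x

/-- The connection matrix over ℝ: L(x,y)=1 if x and y intersect, 0 otherwise. -/
def connL (G : Finset (Finset α)) : Matrix G G ℝ :=
  fun x y => if (x.1 ∩ y.1).Nonempty then 1 else 0

open Matrix RealInnerProductSpace

section InertiaAux

variable {ι E : Type*} [Fintype ι] [NormedAddCommGroup E] [InnerProductSpace ℝ E]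

lemma q_formula (u : OrthonormalBasis ι ℝ E) (μ : ι → ℝ) (T : E →ₗ[ℝ] E)
    (hT : ∀ i, T (u i) = μ i • u i) (x : E) :
    ⟪x, T x⟫ = ∑ i, μ i * ⟪u i, x⟫ ^ 2 := by
  classical
  have hx : T x = ∑ i, ⟪u i, x⟫ • (μ i • u i) := by
    conv_lhs => rw [← u.sum_repr' x, map_sum]
    exact Finset.sum_congr rfl fun i _ => by rw [_root_.map_smul, hT]
  have h1 : ∀ i, ⟪u i, T x⟫ = μ i * ⟪u i, x⟫ := by
    intro i
    rw [hx, inner_sum]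
    rw [Finset.sum_eq_single i]
    · rw [real_inner_smul_right, real_inner_smul_right,
        real_inner_self_eq_norm_sq, u.orthonormal.1 i]
      ring
    · intro j _ hj
      rw [real_inner_smul_right, real_inner_smul_right,
        u.orthonormal.2 (Ne.symm hj)]
      ring
    · intro h; exact absurd (Finset.mem_univ i) h
  rw [← u.sum_inner_mul_inner x (T x)]
  exact Finset.sum_congr rfl fun i _ => by
    rw [h1 i, real_inner_comm x (u i)]; ring

lemma coords_eq_zero_of_ne (u : OrthonormalBasis ι ℝ E) (x : E)
    (h : ∀ i, ⟪u i, x⟫ = 0) : x = 0 := by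
  rw [← u.sum_repr' x]
  simp [h]

lemma finrank_le_card_pos (u : OrthonormalBasis ι ℝ E) (μ : ι → ℝ) (T : E →ₗ[ℝ] E)
    (hT : ∀ i, T (u i) = μ i • u i) (W : Submodule ℝ E)
    (hW : ∀ v ∈ W, v ≠ 0 → 0 < ⟪v, T v⟫) :
    Module.finrank ℝ W ≤ Fintype.card {i // 0 < μ i} := by
  classical
  set φ : E →ₗ[ℝ] ({i // 0 < μ i} → ℝ) :=
    LinearMap.pi (fun i => (innerSL ℝ (u i.1)).toLinearMap) with hφ
  have key : ∀ v ∈ W, φ v = 0 → v = 0 := by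
    intro v hv h0
    by_contra hne
    have hpos := hW v hv hne
    rw [q_formula u μ T hT v] at hpos
    have : ∑ i, μ i * ⟪u i, v⟫ ^ 2 ≤ 0 := by
      apply Finset.sum_nonpos
      intro i _
      by_cases h : 0 < μ i
      · have hz : ⟪u i, v⟫ = 0 := by
          have := congrFun h0 ⟨i, h⟩
          simpa [hφ] using this
        simp [hz]
      · push_neg at h
        exact mul_nonpos_of_nonpos_of_nonneg h (sq_nonneg _)
    linarith
  have hinj : Function.Injective (φ.domRestrict W) := by
    rw [← LinearMap.ker_eq_bot, LinearMap.ker_eq_bot']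
    rintro ⟨v, hv⟩ h
    exact Subtype.ext (key v hv h)
  have := LinearMap.finrank_le_finrank_of_injective hinj
  simpa [Module.finrank_pi] using this

lemma inertia_le {κ F : Type*} [Fintype κ] [NormedAddCommGroup F] [InnerProductSpace ℝ F]
    (u : OrthonormalBasis ι ℝ E) (μ : ι → ℝ) (T : E →ₗ[ℝ] E)
    (hT : ∀ i, T (u i) = μ i • u i)
    (w : OrthonormalBasis κ ℝ F) (ν : κ → ℝ) (S : F →ₗ[ℝ] F)
    (hS : ∀ j, S (w j) = ν j • w j)
    (g : E ≃ₗ[ℝ] F) (hg : ∀ x, ⟪x, T x⟫ = ⟪g x, S (g x)⟫) :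
    Fintype.card {i // 0 < μ i} ≤ Fintype.card {j // 0 < ν j} := by
  classical
  set W : Submodule ℝ E := Submodule.span ℝ (Set.range fun i : {i // 0 < μ i} => u i) with hWdef
  have hli : LinearIndependent ℝ (fun i : {i // 0 < μ i} => u i) :=
    (u.orthonormal.comp Subtype.val Subtype.val_injective).linearIndependent
  have hrank : Module.finrank ℝ W = Fintype.card {i // 0 < μ i} :=
    finrank_span_eq_card hli
  have hcoord : ∀ x ∈ W, ∀ j, ¬ 0 < μ j → ⟪u j, x⟫ = 0 := by
    intro x hx j hj
    have hker : W ≤ LinearMap.ker ((innerSL ℝ (u j)).toLinearMap) := by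
      rw [hWdef, Submodule.span_le]
      rintro _ ⟨i, rfl⟩
      have hne : j ≠ i.1 := fun h => hj (h ▸ i.2)
      simpa [LinearMap.mem_ker] using u.orthonormal.2 hne
    simpa [LinearMap.mem_ker] using hker hx
  have hpos : ∀ x ∈ W, x ≠ 0 → 0 < ⟪x, T x⟫ := by
    intro x hx hx0
    rw [q_formula u μ T hT x]
    have hterm : ∀ i, 0 ≤ μ i * ⟪u i, x⟫ ^ 2 := by
      intro i
      by_cases h : 0 < μ i
      · exact mul_nonneg h.le (sq_nonneg _)
      · rw [hcoord x hx i h]; simp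
    obtain ⟨i, hi⟩ : ∃ i, ⟪u i, x⟫ ≠ 0 := by
      by_contra h; push_neg at h
      exact hx0 (coords_eq_zero_of_ne u x h)
    have hμi : 0 < μ i := by
      by_contra h; exact hi (hcoord x hx i h)
    have hstrict : 0 < μ i * ⟪u i, x⟫ ^ 2 :=
      mul_pos hμi (pow_two_pos_of_ne_zero hi)
    exact Finset.sum_pos' (fun i _ => hterm i) ⟨i, Finset.mem_univ i, hstrict⟩
  have hW' : ∀ y ∈ W.map (g : E →ₗ[ℝ] F), y ≠ 0 → 0 < ⟪y, S y⟫ := by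
    rintro _ ⟨x, hx, rfl⟩ hy0
    have hx0 : x ≠ 0 := fun h => hy0 (by simp [h])
    have h2 := hpos x hx hx0
    rw [hg x] at h2
    simpa using h2
  have hb := finrank_le_card_pos w ν S hS (W.map (g : E →ₗ[ℝ] F)) hW'
  rwa [LinearEquiv.finrank_map_eq g W, hrank] at hb

lemma inertia_eq {κ F : Type*} [Fintype κ] [NormedAddCommGroup F] [InnerProductSpace ℝ F]
    (u : OrthonormalBasis ι ℝ E) (μ : ι → ℝ) (T : E →ₗ[ℝ] E)
    (hT : ∀ i, T (u i) = μ i • u i)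
    (w : OrthonormalBasis κ ℝ F) (ν : κ → ℝ) (S : F →ₗ[ℝ] F)
    (hS : ∀ j, S (w j) = ν j • w j)
    (g : E ≃ₗ[ℝ] F) (hg : ∀ x, ⟪x, T x⟫ = ⟪g x, S (g x)⟫) :
    Fintype.card {i // 0 < μ i} = Fintype.card {j // 0 < ν j} := by
  refine le_antisymm (inertia_le u μ T hT w ν S hS g hg) (inertia_le w ν S hS u μ T hT g.symm ?_)
  intro y
  have := hg (g.symm y)
  rw [g.apply_symm_apply] at this
  exact this.symm

end InertiaAux

/-- The sign function on simplices, real valued. -/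
noncomputable def dsign (z : Finset α) : ℝ := (-1 : ℝ) ^ (z.card - 1)

lemma sum_nonempty_powerset (S : Finset α) :
    ∑ z ∈ S.powerset.filter (·.Nonempty), dsign z = if S.Nonempty then 1 else 0 := by
  classical
  have hz : (∑ m ∈ S.powerset, (-1 : ℝ) ^ m.card) = if S = ∅ then 1 else 0 := by
    have h := @Finset.sum_powerset_neg_one_pow_card α _ S
    calc (∑ m ∈ S.powerset, (-1 : ℝ) ^ m.card)
        = ((∑ m ∈ S.powerset, (-1 : ℤ) ^ m.card : ℤ) : ℝ) := by push_cast; rfl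
      _ = _ := by rw [h]; split_ifs <;> simp
  have hsplit : ∑ m ∈ S.powerset, (-1 : ℝ) ^ m.card
      = 1 + ∑ z ∈ S.powerset.filter (·.Nonempty), (-1 : ℝ) ^ z.card := by
    rw [← Finset.sum_filter_add_sum_filter_not S.powerset (·.Nonempty)]
    have hempty : S.powerset.filter (fun z => ¬ z.Nonempty) = {∅} := by
      ext z
      simp [Finset.not_nonempty_iff_eq_empty, Finset.empty_mem_powerset]
      intro h; subst h; simp
    rw [hempty]
    simp [add_comm]
  have hneg : ∑ z ∈ S.powerset.filter (·.Nonempty), dsign z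
      = -∑ z ∈ S.powerset.filter (·.Nonempty), (-1 : ℝ) ^ z.card := by
    rw [← Finset.sum_neg_distrib]
    apply Finset.sum_congr rfl
    intro z hz
    have hzne : z.Nonempty := (Finset.mem_filter.mp hz).2
    have hcard : z.card = (z.card - 1) + 1 :=
      (Nat.succ_pred_eq_of_pos (Finset.card_pos.mpr hzne)).symm
    rw [dsign]
    conv_rhs => rw [hcard]
    rw [pow_succ]
    ring
  rw [hneg]
  have : ∑ z ∈ S.powerset.filter (·.Nonempty), (-1 : ℝ) ^ z.card
      = (if S = ∅ then 1 else 0) - 1 := by rw [← hz, hsplit]; ring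
  rw [this]
  by_cases hS : S.Nonempty
  · rw [if_neg (Finset.nonempty_iff_ne_empty.mp hS), if_pos hS]; ring
  · rw [Finset.not_nonempty_iff_eq_empty] at hS
    subst hS
    simp

/-- The unipotent incidence matrix. -/
def incA (G : Finset (Finset α)) : Matrix G G ℝ :=
  fun z x => if z.1 ⊆ x.1 then 1 else 0

lemma connL_factor (G : Finset (Finset α)) (hG : IsComplex G) :
    connL G = (incA G)ᵀ * Matrix.diagonal (fun z : G => dsign z.1) * (incA G) := by
  classical
  ext x y
  rw [Matrix.mul_assoc, Matrix.mul_apply]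
  have hterm : ∀ z : G, (incA G)ᵀ x z *
      (Matrix.diagonal (fun z : G => dsign z.1) * incA G) z y
      = if z.1 ⊆ x.1 ∩ y.1 then dsign z.1 else 0 := by
    intro z
    rw [Matrix.diagonal_mul, Matrix.transpose_apply]
    simp only [incA, Finset.subset_inter_iff]
    by_cases h1 : z.1 ⊆ x.1 <;> by_cases h2 : z.1 ⊆ y.1 <;> simp [h1, h2]
  rw [Finset.sum_congr rfl (fun z _ => hterm z)]
  have hsum : ∑ z : G, (if z.1 ⊆ x.1 ∩ y.1 then dsign z.1 else 0)
      = ∑ z ∈ G, (if z ⊆ x.1 ∩ y.1 then dsign z else 0) :=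
    Finset.sum_coe_sort G (fun z => if z ⊆ x.1 ∩ y.1 then dsign z else 0)
  rw [hsum, ← Finset.sum_filter]
  have hfe : G.filter (· ⊆ x.1 ∩ y.1) = (x.1 ∩ y.1).powerset.filter (·.Nonempty) := by
    ext z
    simp only [Finset.mem_filter, Finset.mem_powerset]
    constructor
    · rintro ⟨hzG, hsub⟩
      exact ⟨hsub, hG.1 z hzG⟩
    · rintro ⟨hsub, hne⟩
      refine ⟨hG.2 x.1 x.2 z hne (hsub.trans (Finset.inter_subset_left)), hsub⟩
  rw [hfe, sum_nonempty_powerset, connL]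

lemma incA_isUnit (G : Finset (Finset α)) (hG : IsComplex G) : IsUnit (incA G) := by
  classical
  rw [← Matrix.isUnit_transpose, ← Matrix.mulVec_injective_iff_isUnit]
  intro v w hvw
  have h0 : (incA G)ᵀ *ᵥ (v - w) = 0 := by
    rw [Matrix.mulVec_sub, hvw, sub_self]
  set u : G → ℝ := v - w with hu
  have key : ∀ n : ℕ, ∀ x : G, x.1.card ≤ n → u x = 0 := by
    intro n
    induction n with
    | zero =>
      intro x hx
      have := Finset.card_pos.mpr (hG.1 x.1 x.2)
      omega
    | succ n ih =>
      intro x hx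
      have hrow := congrFun h0 x
      rw [Matrix.mulVec, dotProduct] at hrow
      have hterm : ∀ z : G, (incA G)ᵀ x z * u z = if z.1 ⊆ x.1 then u z else 0 := by
        intro z
        rw [Matrix.transpose_apply]
        by_cases h : z.1 ⊆ x.1 <;> simp [incA, h]
      rw [Finset.sum_congr rfl (fun z _ => hterm z)] at hrow
      rw [← Finset.add_sum_erase Finset.univ _ (Finset.mem_univ x)] at hrow
      have hzero : ∀ z ∈ Finset.univ.erase x, (if z.1 ⊆ x.1 then u z else 0) = 0 := by
        intro z hz
        by_cases h : z.1 ⊆ x.1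
        · have hne : z ≠ x := Finset.ne_of_mem_erase hz
          have hss : z.1 ⊂ x.1 := lt_of_le_of_ne h (fun he => hne (Subtype.ext he))
          have hlt : z.1.card < x.1.card := Finset.card_lt_card hss
          rw [if_pos h, ih z (by omega)]
        · rw [if_neg h]
      rw [Finset.sum_eq_zero hzero, add_zero, if_pos (subset_refl _)] at hrow
      exact hrow
  have : u = 0 := funext fun x => key x.1.card x le_rfl
  exact sub_eq_zero.mp (hu ▸ this)

lemma card_subtype_filter (G : Finset (Finset α)) (P : Finset α → Prop) [DecidablePred P] :
    (Finset.univ.filter (fun z : G => P z.1)).card = (G.filter P).card := by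
  classical
  apply Finset.card_bij (fun (z : G) _ => z.1)
  · intro a ha
    rw [Finset.mem_filter]
    exact ⟨a.2, (Finset.mem_filter.mp ha).2⟩
  · intro a _ b _ h
    exact Subtype.ext h
  · intro b hb
    exact ⟨⟨b, (Finset.mem_filter.mp hb).1⟩,
      Finset.mem_filter.mpr ⟨Finset.mem_univ _, (Finset.mem_filter.mp hb).2⟩, rfl⟩

lemma dsign_pos_iff {z : Finset α} (hz : z.Nonempty) : 0 < dsign z ↔ z.card % 2 = 1 := by
  have hc : 1 ≤ z.card := Finset.card_pos.mpr hz
  rcases Nat.even_or_odd z.card with h | h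
  · have hodd : Odd (z.card - 1) := Nat.Even.sub_odd hc h odd_one
    rw [dsign, hodd.neg_one_pow]
    simp [Nat.even_iff.mp h]
  · have heven : Even (z.card - 1) := Nat.Odd.sub_odd h odd_one
    rw [dsign, heven.neg_one_pow]
    simp [Nat.odd_iff.mp h]

lemma dsign_neg_iff {z : Finset α} (hz : z.Nonempty) : 0 < -dsign z ↔ z.card % 2 = 0 := by
  have hc : 1 ≤ z.card := Finset.card_pos.mpr hz
  rcases Nat.even_or_odd z.card with h | h
  · have hodd : Odd (z.card - 1) := Nat.Even.sub_odd hc h odd_one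
    rw [dsign, hodd.neg_one_pow]
    simp [Nat.even_iff.mp h]
  · have heven : Even (z.card - 1) := Nat.Odd.sub_odd h odd_one
    rw [dsign, heven.neg_one_pow]
    simp [Nat.odd_iff.mp h]

theorem hearing_euler_characteristic (G : Finset (Finset α)) (hG : IsComplex G)
    (hL : (connL G).IsHermitian) :
    ((Finset.univ.filter (fun x : G => 0 < hL.eigenvalues x)).card
        = (G.filter (fun x => x.card % 2 = 1)).card) ∧
    ((Finset.univ.filter (fun x : G => hL.eigenvalues x < 0)).card
        = (G.filter (fun x => x.card % 2 = 0)).card) ∧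
    (∀ x : G, hL.eigenvalues x ≠ 0) ∧
    ((Finset.univ.filter (fun x : G => 0 < hL.eigenvalues x)).card : ℤ)
      - ((Finset.univ.filter (fun x : G => hL.eigenvalues x < 0)).card : ℤ)
      = chi G := by
  classical
  set A := incA G with hA
  set D := Matrix.diagonal (fun z : G => dsign z.1) with hD
  have hfact := connL_factor G hG
  have hAunit : IsUnit A := incA_isUnit G hG
  have hmv : Function.Injective (A.mulVec) := Matrix.mulVec_injective_iff_isUnit.mpr hAunit
  set T := Matrix.toEuclideanLin (connL G) with hT0
  set S := Matrix.toEuclideanLin D with hS0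
  have hginj : Function.Injective (Matrix.toEuclideanLin A) := by
    intro x y hxy
    rw [Matrix.toEuclideanLin_apply, Matrix.toEuclideanLin_apply] at hxy
    have h2 := (WithLp.equiv 2 ({x // x ∈ G} → ℝ)).symm.injective hxy
    exact (WithLp.equiv 2 ({x // x ∈ G} → ℝ)).injective (hmv h2)
  have hgbij : Function.Bijective (Matrix.toEuclideanLin A) :=
    ⟨hginj, LinearMap.injective_iff_surjective.mp hginj⟩
  set g := LinearEquiv.ofBijective (Matrix.toEuclideanLin A) hgbij with hgdef
  have hT : ∀ i, T (hL.eigenvectorBasis i)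
      = hL.eigenvalues i • hL.eigenvectorBasis i := by
    intro i
    ext j
    exact congrFun (hL.mulVec_eigenvectorBasis i) j
  have hS : ∀ z : G, S (EuclideanSpace.basisFun {x // x ∈ G} ℝ z)
      = dsign z.1 • EuclideanSpace.basisFun {x // x ∈ G} ℝ z := by
    intro z
    ext j
    show (D *ᵥ fun i => EuclideanSpace.basisFun {x // x ∈ G} ℝ z i) j
      = (dsign z.1 • EuclideanSpace.basisFun {x // x ∈ G} ℝ z) j
    have : (fun i => EuclideanSpace.basisFun {x // x ∈ G} ℝ z i) = Pi.single z 1 := by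
      funext i
      simp [EuclideanSpace.basisFun_apply, EuclideanSpace.single_apply, Pi.single_apply]
    rw [this, hD, Matrix.diagonal_mulVec_single]
    simp [EuclideanSpace.basisFun_apply, EuclideanSpace.single_apply, Pi.single_apply]
  have hg : ∀ x : EuclideanSpace ℝ {x // x ∈ G}, ⟪x, T x⟫ = ⟪g x, S (g x)⟫ := by
    intro x
    have hwx : ∀ y : EuclideanSpace ℝ {x // x ∈ G},
        (WithLp.equiv 2 ({x // x ∈ G} → ℝ)) y = fun i => y i := fun y => rfl
    have e1 : ⟪x, T x⟫ = (fun i => x i) ⬝ᵥ (connL G *ᵥ fun i => x i) := by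
      rw [PiLp.inner_apply]
      simp [dotProduct, hT0, Matrix.toEuclideanLin_apply, hwx, mul_comm]
    have e2 : ⟪g x, S (g x)⟫ = (A *ᵥ fun i => x i) ⬝ᵥ (D *ᵥ (A *ᵥ fun i => x i)) := by
      rw [PiLp.inner_apply]
      simp [dotProduct, hgdef, hS0, Matrix.toEuclideanLin_apply,
        LinearEquiv.ofBijective_apply, hwx, mul_comm]
    rw [e1, e2, hfact, ← Matrix.mulVec_mulVec, ← Matrix.mulVec_mulVec,
      dotProduct_mulVec, Matrix.vecMul_transpose]
  have hmain := inertia_eq hL.eigenvectorBasis hL.eigenvalues T hT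
    (EuclideanSpace.basisFun {x // x ∈ G} ℝ) (fun z : G => dsign z.1) S hS g hg
  have hmainneg := inertia_eq hL.eigenvectorBasis (fun i => -hL.eigenvalues i) (-T)
    (fun i => by rw [LinearMap.neg_apply, hT, neg_smul])
    (EuclideanSpace.basisFun {x // x ∈ G} ℝ) (fun z : G => -dsign z.1) (-S)
    (fun z => by rw [LinearMap.neg_apply, hS, neg_smul]) g
    (fun x => by rw [LinearMap.neg_apply, LinearMap.neg_apply, inner_neg_right,
      inner_neg_right, hg])
  -- translate cardinalities
  have c1 : (Finset.univ.filter (fun x : G => 0 < hL.eigenvalues x)).card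
      = (G.filter (fun x => x.card % 2 = 1)).card := by
    calc (Finset.univ.filter (fun x : {x // x ∈ G} => 0 < hL.eigenvalues x)).card
        = Fintype.card {i : {x // x ∈ G} // 0 < hL.eigenvalues i} :=
          (Fintype.card_subtype _).symm
      _ = Fintype.card {z : {x // x ∈ G} // 0 < dsign z.1} := hmain
      _ = (Finset.univ.filter (fun z : {x // x ∈ G} => 0 < dsign z.1)).card :=
          Fintype.card_subtype _
      _ = (Finset.univ.filter (fun z : {x // x ∈ G} => z.1.card % 2 = 1)).card :=
          congrArg Finset.card
            (Finset.filter_congr (fun z _ => dsign_pos_iff (hG.1 z.1 z.2)))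
      _ = (G.filter (fun x => x.card % 2 = 1)).card :=
          card_subtype_filter G (fun x => x.card % 2 = 1)
  have c2 : (Finset.univ.filter (fun x : G => hL.eigenvalues x < 0)).card
      = (G.filter (fun x => x.card % 2 = 0)).card := by
    have h1 : (Finset.univ.filter (fun x : G => hL.eigenvalues x < 0))
        = (Finset.univ.filter (fun x : G => 0 < -hL.eigenvalues x)) := by
      apply Finset.filter_congr
      intro z _
      simp [neg_pos]
    calc (Finset.univ.filter (fun x : {x // x ∈ G} => hL.eigenvalues x < 0)).card
        = (Finset.univ.filter (fun x : {x // x ∈ G} => 0 < -hL.eigenvalues x)).card := by rw [h1]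
      _ = Fintype.card {i : {x // x ∈ G} // 0 < -hL.eigenvalues i} :=
          (Fintype.card_subtype _).symm
      _ = Fintype.card {z : {x // x ∈ G} // 0 < -dsign z.1} := hmainneg
      _ = (Finset.univ.filter (fun z : {x // x ∈ G} => 0 < -dsign z.1)).card :=
          Fintype.card_subtype _
      _ = (Finset.univ.filter (fun z : {x // x ∈ G} => z.1.card % 2 = 0)).card :=
          congrArg Finset.card
            (Finset.filter_congr (fun z _ => dsign_neg_iff (hG.1 z.1 z.2)))
      _ = (G.filter (fun x => x.card % 2 = 0)).card :=
          card_subtype_filter G (fun x => x.card % 2 = 0)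
  have hdet : (connL G).det ≠ 0 := by
    rw [hfact, Matrix.det_mul, Matrix.det_mul, Matrix.det_transpose, Matrix.det_diagonal]
    have hA0 : A.det ≠ 0 := ((Matrix.isUnit_iff_isUnit_det A).mp hAunit).ne_zero
    have hD0 : (∏ z : G, dsign z.1) ≠ 0 :=
      Finset.prod_ne_zero_iff.mpr (fun z _ => pow_ne_zero _ (by norm_num))
    exact mul_ne_zero (mul_ne_zero hA0 hD0) hA0
  have hne : ∀ i : G, hL.eigenvalues i ≠ 0 := by
    intro i hi
    apply hdet
    have hprod := hL.det_eq_prod_eigenvalues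
    rw [hprod]
    exact Finset.prod_eq_zero (Finset.mem_univ i) (by rw [hi]; norm_num)
  refine ⟨c1, c2, hne, ?_⟩
  rw [c1, c2]
  have hsplit := Finset.sum_filter_add_sum_filter_not G (fun x => x.card % 2 = 1) omegaS
  have hone : ∑ x ∈ G.filter (fun x => x.card % 2 = 1), omegaS x
      = ((G.filter (fun x => x.card % 2 = 1)).card : ℤ) := by
    rw [Finset.sum_congr rfl (fun x hx => ?_), Finset.sum_const, nsmul_eq_mul, mul_one]
    have hodd : x.card % 2 = 1 := (Finset.mem_filter.mp hx).2
    have heven : Even (x.card - 1) := Nat.Odd.sub_odd (Nat.odd_iff.mpr hodd) odd_one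
    rw [omegaS, heven.neg_one_pow]
  have hmone : ∑ x ∈ G.filter (fun x => ¬ x.card % 2 = 1), omegaS x
      = -((G.filter (fun x => x.card % 2 = 0)).card : ℤ) := by
    have hfeq : G.filter (fun x => ¬ x.card % 2 = 1) = G.filter (fun x => x.card % 2 = 0) := by
      apply Finset.filter_congr
      intro x _
      constructor
      · intro h; omega
      · intro h; omega
    rw [hfeq, Finset.sum_congr rfl (fun x hx => ?_), Finset.sum_const, nsmul_eq_mul, mul_neg_one]
    have hx2 : x.card % 2 = 0 := (Finset.mem_filter.mp hx).2
    have hc : 1 ≤ x.card := Finset.card_pos.mpr (hG.1 x (Finset.mem_filter.mp hx).1)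
    have hodd : Odd (x.card - 1) := Nat.Even.sub_odd hc (Nat.even_iff.mpr hx2) odd_one
    rw [omegaS, hodd.neg_one_pow]
  rw [chi, ← hsplit, hone, hmone]
  ring
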